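/- arXiv:2106.13834 — 4 statements merged into one kernel-verified Lean document; each statement's English description precedes it below -/
import Mathlib

section
/- For every K ∈ ℕ, coefficients π ∈ ℝ^K, scalar λ ∈ ℝ, vectors p_1, …, p_K ∈ ℝ^d, and integer m ≥ 1, the polynomial-kernel model y(x) = Σ_{k=1}^K π_k (λ + p_k^⊤ x)^m can be written as an LPNN function: there exist a depth L, hidden widths d_1, …, d_L, LPNN weight matrices W^1, …, W^L and V^1, …, V^L acting on the augmented input x̂ = (x, 1) ∈ ℝ^{d+1}, and a linear readout vector u ∈ ℝ^{d_L}, such that for all x ∈ ℝ^d, Σ_{k=1}^K π_k (λ + p_k^⊤ x)^m = u^⊤ h^L(x̂). -/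
open Matrix

/-- Low-rank polynomial network (LPNN): widths `d`, with `d 0` the input
dimension. `lpnn d W V x L` is the hidden layer `h^L(x)`, defined by
`h^0 = x` and `h^(ℓ+1) = (W^ℓ h^ℓ) ⊙ (V^ℓ x)` (Hadamard product). -/
def lpnn (d : ℕ → ℕ)
    (W : ∀ ℓ : ℕ, Matrix (Fin (d (ℓ + 1))) (Fin (d ℓ)) ℝ)
    (V : ∀ ℓ : ℕ, Matrix (Fin (d (ℓ + 1))) (Fin (d 0)) ℝ)
    (x : Fin (d 0) → ℝ) : ∀ L : ℕ, Fin (d L) → ℝ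
  | 0 => x
  | (L + 1) => ((W L).mulVec (lpnn d W V x L)) * ((V L).mulVec x)

/-- Widths: input `d+1`, all hidden layers of width `K`. -/
def ddA (d K : ℕ) : ℕ → ℕ
  | 0 => d + 1
  | _ + 1 => K

/-- First layer `W` picks out the constant coordinate; later layers are identity. -/
def WA (d K : ℕ) : ∀ ℓ, Matrix (Fin (ddA d K (ℓ + 1))) (Fin (ddA d K ℓ)) ℝ
  | 0 => fun _ j => @ite ℝ (j = Fin.last d) (instDecidableEqFin (d + 1) j (Fin.last d)) 1 0
  | _ + 1 => (1 : Matrix (Fin K) (Fin K) ℝ)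

/-- Every layer's `V` has rows `(p_k, λ)`. -/
def VA (d K : ℕ) (p : Fin K → Fin d → ℝ) (lam : ℝ) :
    ∀ ℓ, Matrix (Fin (ddA d K (ℓ + 1))) (Fin (ddA d K 0)) ℝ :=
  fun _ k => Fin.snoc (p k) lam

lemma VA_mulVec (d K : ℕ) (p : Fin K → Fin d → ℝ) (lam : ℝ) (ℓ : ℕ)
    (x : Fin d → ℝ) (k : Fin K) :
    (VA d K p lam ℓ).mulVec (Fin.snoc (α := fun _ : Fin (d+1) => ℝ) x 1) k
      = lam + p k ⬝ᵥ x := by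
  show (Fin.snoc (α := fun _ : Fin (d+1) => ℝ) (p k) lam) ⬝ᵥ
      (Fin.snoc (α := fun _ : Fin (d+1) => ℝ) x 1) = _
  simp [dotProduct, Fin.sum_univ_castSucc]
  ring

lemma lpnn_A (d K : ℕ) (p : Fin K → Fin d → ℝ) (lam : ℝ) (x : Fin d → ℝ) (n : ℕ) :
    lpnn (ddA d K) (WA d K) (VA d K p lam)
        (Fin.snoc (α := fun _ : Fin (d+1) => ℝ) x 1) (n + 1)
      = fun k => (lam + p k ⬝ᵥ x) ^ (n + 1) := by
  induction n with
  | zero =>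
      funext k
      show (WA d K 0).mulVec (Fin.snoc (α := fun _ : Fin (d+1) => ℝ) x 1) k *
        (VA d K p lam 0).mulVec (Fin.snoc (α := fun _ : Fin (d+1) => ℝ) x 1) k = _
      erw [VA_mulVec]
      have hW : (WA d K 0).mulVec
          (Fin.snoc (α := fun _ : Fin (d+1) => ℝ) x 1) k = 1 := by
        simp [WA, Matrix.mulVec, dotProduct, ite_mul]
        show ∑ i : Fin (d+1), (if i = Fin.last d then (1:ℝ) else 0) *
          Fin.snoc (α := fun _ : Fin (d+1) => ℝ) x 1 i = 1
        simp
      rw [hW, one_mul, pow_one]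
  | succ n ih =>
      funext k
      show (WA d K (n+1)).mulVec
          (lpnn (ddA d K) (WA d K) (VA d K p lam)
            (Fin.snoc (α := fun _ : Fin (d+1) => ℝ) x 1) (n+1)) k *
        (VA d K p lam (n+1)).mulVec (Fin.snoc (α := fun _ : Fin (d+1) => ℝ) x 1) k = _
      rw [ih]; erw [VA_mulVec]
      show ((1 : Matrix (Fin K) (Fin K) ℝ).mulVec
          (fun k => (lam + p k ⬝ᵥ x) ^ (n + 1))) k * _ = _
      rw [Matrix.one_mulVec]
      ring

/-- every polynomial-kernel model
`y(x) = ∑ k, πₖ * (λ + pₖᵀ x)^m` (m ≥ 1) can be written as an LPNN function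
on the augmented input `x̂ = (x, 1)`, followed by a linear readout `u`. -/
theorem polynomial_kernel_is_lpnn (K d : ℕ) (pi : Fin K → ℝ) (lam : ℝ)
    (p : Fin K → Fin d → ℝ) (m : ℕ) (hm : 1 ≤ m) :
    ∃ (L : ℕ) (dd : ℕ → ℕ) (hd : dd 0 = d + 1)
      (W : ∀ ℓ : ℕ, Matrix (Fin (dd (ℓ + 1))) (Fin (dd ℓ)) ℝ)
      (V : ∀ ℓ : ℕ, Matrix (Fin (dd (ℓ + 1))) (Fin (dd 0)) ℝ)
      (u : Fin (dd L) → ℝ),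
      ∀ x : Fin d → ℝ,
        ∑ k, pi k * (lam + p k ⬝ᵥ x) ^ m =
          u ⬝ᵥ lpnn dd W V (fun i => Fin.snoc (α := fun _ : Fin (d + 1) => ℝ) x 1 (Fin.cast hd i)) L := by
  obtain ⟨n, rfl⟩ : ∃ n, m = n + 1 := ⟨m - 1, by omega⟩
  refine ⟨n + 1, ddA d K, rfl, WA d K, VA d K p lam, pi, fun x => ?_⟩
  show _ = pi ⬝ᵥ lpnn (ddA d K) (WA d K) (VA d K p lam)
      (Fin.snoc (α := fun _ : Fin (d+1) => ℝ) x 1) (n + 1)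
  rw [lpnn_A]
  simp [dotProduct]
end

section
/- For every w_0 ∈ ℝ, w_1 ∈ ℝ^{d_0}, and vectors v_1, …, v_{d_0} ∈ ℝ^r, the second-order factorization machine y(x) = w_0 + w_1^⊤ x + Σ_{i=1}^{d_0} Σ_{j=i+1}^{d_0} v_i^⊤ v_j x_i x_j can be written as an LPNN function: there exist a depth L, hidden widths, LPNN weight matrices acting on the augmented input x̂ = (x, 1) ∈ ℝ^{d_0+1}, and a linear readout vector u, such that for all x ∈ ℝ^{d_0}, y(x) = u^⊤ h^L(x̂). -/
open Matrix

-- symmetric double-sum split lemma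
lemma split_sum {n : ℕ} (A : Fin n → Fin n → ℝ) :
    ∑ i, ∑ j, A i j =
      ∑ i, A i i + ∑ i, ∑ j ∈ Finset.Ioi i, (A i j + A j i) := by
  have key : ∀ i j : Fin n, A i j =
      (if i = j then A i j else 0) + (if i < j then A i j else 0) +
        (if j < i then A i j else 0) := by
    intro i j
    rcases lt_trichotomy i j with h | h | h
    · simp [h, h.ne, lt_asymm h]
    · simp [h]
    · simp [h, (h.ne).symm, lt_asymm h, h.ne]
  calc ∑ i, ∑ j, A i j
      = ∑ i, ∑ j, ((if i = j then A i j else 0) + (if i < j then A i j else 0) +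
          (if j < i then A i j else 0)) := by
        refine Finset.sum_congr rfl fun i _ => Finset.sum_congr rfl fun j _ => key i j
    _ = (∑ i, ∑ j, if i = j then A i j else 0) +
        (∑ i, ∑ j, if i < j then A i j else 0) +
        (∑ i, ∑ j, if j < i then A i j else 0) := by
        simp [Finset.sum_add_distrib]
    _ = ∑ i, A i i + ∑ i, ∑ j ∈ Finset.Ioi i, (A i j + A j i) := by
        rw [Finset.sum_comm (f := fun i j => if j < i then A i j else 0)]
        simp only [Finset.sum_ite_eq, Finset.mem_univ, if_true]
        simp_rw [← Finset.mem_Ioi, Finset.sum_ite_mem, Finset.univ_inter]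
        rw [add_assoc, ← Finset.sum_add_distrib]
        simp_rw [← Finset.sum_add_distrib]


noncomputable def fmW (d₀ r : ℕ) (w₀ : ℝ) (w₁ : Fin d₀ → ℝ) (v : Fin d₀ → Fin r → ℝ) :
    Matrix (Fin ((r + d₀) + 1)) (Fin (d₀ + 1)) ℝ :=
  fun k => Fin.lastCases (Fin.snoc w₁ w₀)
    (fun k' => Fin.addCases (fun f => Fin.snoc (fun i => v i f) 0)
      (fun i => Pi.single (i.castSucc) (1 : ℝ)) k') k

noncomputable def fmV (d₀ r : ℕ) (v : Fin d₀ → Fin r → ℝ) :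
    Matrix (Fin ((r + d₀) + 1)) (Fin (d₀ + 1)) ℝ :=
  fun k => Fin.lastCases (Pi.single (Fin.last d₀) (1 : ℝ))
    (fun k' => Fin.addCases (fun f => Fin.snoc (fun i => v i f) 0)
      (fun i => Pi.single (i.castSucc) (1 : ℝ)) k') k

noncomputable def fmU (d₀ r : ℕ) (v : Fin d₀ → Fin r → ℝ) : Fin ((r + d₀) + 1) → ℝ :=
  Fin.lastCases 1
    (Fin.addCases (fun _ => (1 : ℝ) / 2) (fun i => -(∑ f, v i f * v i f) / 2))

lemma fm_aux (d₀ r : ℕ) (w₀ : ℝ) (w₁ : Fin d₀ → ℝ) (v : Fin d₀ → Fin r → ℝ)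
    (x : Fin d₀ → ℝ) :
    w₀ + w₁ ⬝ᵥ x + ∑ i, ∑ j ∈ Finset.Ioi i, (v i ⬝ᵥ v j) * x i * x j =
      fmU d₀ r v ⬝ᵥ
        (((fmW d₀ r w₀ w₁ v).mulVec ((Fin.snoc (α := fun _ : Fin (d₀ + 1) => ℝ) x 1))) *
          ((fmV d₀ r v).mulVec ((Fin.snoc (α := fun _ : Fin (d₀ + 1) => ℝ) x 1)))) := by
  classical
  simp only [fmU, fmW, fmV, dotProduct, mulVec, Pi.mul_apply]
  rw [Fin.sum_univ_castSucc]
  simp only [Fin.lastCases_last, Fin.lastCases_castSucc]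
  rw [Fin.sum_univ_add]
  simp only [Fin.addCases_left, Fin.addCases_right]
  -- evaluate the dot products of the special rows with (x, 1)
  have hsnoc : ∀ (a : Fin d₀ → ℝ) (c : ℝ),
      (∑ j : Fin (d₀ + 1), (Fin.snoc (α := fun _ : Fin (d₀ + 1) => ℝ) a c) j * (Fin.snoc (α := fun _ : Fin (d₀ + 1) => ℝ) x 1) j) = (∑ i, a i * x i) + c := by
    intro a c
    rw [Fin.sum_univ_castSucc]
    simp
  have hsingle : ∀ k : Fin (d₀ + 1),
      (∑ j : Fin (d₀ + 1), (Pi.single (M := fun _ : Fin (d₀ + 1) => ℝ) k 1) j * (Fin.snoc (α := fun _ : Fin (d₀ + 1) => ℝ) x 1) j) = (Fin.snoc (α := fun _ : Fin (d₀ + 1) => ℝ) x 1) k := by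
    intro k
    simp [Pi.single_apply, ite_mul]
  simp only [hsnoc, hsingle, Fin.snoc_castSucc, Fin.snoc_last, add_zero, one_mul, mul_one]
  have expand : ∑ f : Fin r, (∑ i, v i f * x i) * (∑ i, v i f * x i)
      = ∑ i, (∑ f, v i f * v i f) * (x i * x i)
        + ∑ i, ∑ j ∈ Finset.Ioi i, 2 * ((∑ f, v i f * v j f) * x i * x j) := by
    have h1 : ∀ f : Fin r, (∑ i, v i f * x i) * (∑ i, v i f * x i)
        = ∑ i, ∑ j, (v i f * x i) * (v j f * x j) := fun f => Finset.sum_mul_sum _ _ _ _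
    calc ∑ f : Fin r, (∑ i, v i f * x i) * (∑ i, v i f * x i)
        = ∑ f : Fin r, ∑ i, ∑ j, (v i f * x i) * (v j f * x j) := by
          exact Finset.sum_congr rfl fun f _ => h1 f
      _ = ∑ i, ∑ j, ∑ f : Fin r, (v i f * x i) * (v j f * x j) := by
          rw [Finset.sum_comm]
          exact Finset.sum_congr rfl fun i _ => Finset.sum_comm
      _ = _ := by
          rw [split_sum (fun i j => ∑ f : Fin r, (v i f * x i) * (v j f * x j))]
          congr 1
          · exact Finset.sum_congr rfl fun i _ => by
              rw [Finset.sum_mul]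
              exact Finset.sum_congr rfl fun f _ => by ring
          · refine Finset.sum_congr rfl fun i _ => Finset.sum_congr rfl fun j _ => ?_
            have : ∀ i' j' : Fin d₀, (∑ f, (v i' f * x i') * (v j' f * x j'))
                = (∑ f, v i' f * v j' f) * x i' * x j' := by
              intro i' j'
              rw [Finset.sum_mul, Finset.sum_mul]
              exact Finset.sum_congr rfl fun f _ => by ring
            rw [this i j, this j i]
            have : (∑ f, v j f * v i f) = ∑ f, v i f * v j f :=
              Finset.sum_congr rfl fun f _ => by ring
            rw [this]
            ring
  have hD : ∑ i, (-∑ f, v i f * v i f) / 2 * (x i * x i)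
      = -(1/2) * ∑ i, (∑ f, v i f * v i f) * (x i * x i) := by
    rw [Finset.mul_sum]
    exact Finset.sum_congr rfl fun i _ => by ring
  have hC : ∑ i, ∑ j ∈ Finset.Ioi i, 2 * ((∑ f, v i f * v j f) * x i * x j)
      = 2 * ∑ i, ∑ j ∈ Finset.Ioi i, (∑ f, v i f * v j f) * x i * x j := by
    rw [Finset.mul_sum]
    exact Finset.sum_congr rfl fun i _ => (Finset.mul_sum _ _ _).symm
  rw [← Finset.mul_sum, expand, hC, hD]
  ring

/-- every second-order factorization machine
`y(x) = w₀ + w₁ᵀ x + ∑_{i<j} vᵢᵀ vⱼ xᵢ xⱼ` can be written as an LPNN function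
on the augmented input `x̂ = (x, 1)`, followed by a linear readout `u`. -/
theorem factorization_machine_is_lpnn (d₀ r : ℕ) (w₀ : ℝ) (w₁ : Fin d₀ → ℝ)
    (v : Fin d₀ → Fin r → ℝ) :
    ∃ (L : ℕ) (dd : ℕ → ℕ) (hd : dd 0 = d₀ + 1)
      (W : ∀ ℓ : ℕ, Matrix (Fin (dd (ℓ + 1))) (Fin (dd ℓ)) ℝ)
      (V : ∀ ℓ : ℕ, Matrix (Fin (dd (ℓ + 1))) (Fin (dd 0)) ℝ)
      (u : Fin (dd L) → ℝ),
      ∀ x : Fin d₀ → ℝ,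
        w₀ + w₁ ⬝ᵥ x + ∑ i, ∑ j ∈ Finset.Ioi i, (v i ⬝ᵥ v j) * x i * x j =
          u ⬝ᵥ lpnn dd W V
            (fun i => Fin.snoc (α := fun _ : Fin (d₀ + 1) => ℝ) x 1 (Fin.cast hd i)) L := by
  refine ⟨1, fun ℓ => Nat.casesOn ℓ (d₀ + 1) (fun _ => (r + d₀) + 1), rfl,
    fun ℓ => Nat.casesOn ℓ (fmW d₀ r w₀ w₁ v) (fun _ => 0),
    fun ℓ => Nat.casesOn ℓ (fmV d₀ r v) (fun _ => 0),
    fmU d₀ r v, fun x => ?_⟩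
  exact fm_aux d₀ r w₀ w₁ v x
end

section
/- If f : ℝ^{d_L} × Y → ℝ is such that h ↦ f(h, y) is convex for each label y, then the LPNN training objective is multiconvex in the parameters: for any fixed input x, fixed label y, fixed layer index ℓ₀ ∈ {1, …, L}, and fixed values of all weight matrices except W^{ℓ₀} (respectively except V^{ℓ₀}), the map W^{ℓ₀} ↦ f(h^L(x), y) (respectively V^{ℓ₀} ↦ f(h^L(x), y)) is a convex function on the corresponding matrix space. -/
open Matrix

lemma lpnn_update_W_of_le (d : ℕ → ℕ)
    (W : ∀ ℓ : ℕ, Matrix (Fin (d (ℓ + 1))) (Fin (d ℓ)) ℝ)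
    (V : ∀ ℓ : ℕ, Matrix (Fin (d (ℓ + 1))) (Fin (d 0)) ℝ)
    (x : Fin (d 0) → ℝ) (ℓ₀ : ℕ) (M : Matrix (Fin (d (ℓ₀ + 1))) (Fin (d ℓ₀)) ℝ) :
    ∀ K : ℕ, K ≤ ℓ₀ → lpnn d (Function.update W ℓ₀ M) V x K = lpnn d W V x K
  | 0, _ => rfl
  | (K + 1), h => by
      have hK : K ≠ ℓ₀ := by omega
      simp [lpnn, Function.update_of_ne hK,
        lpnn_update_W_of_le d W V x ℓ₀ M K (by omega)]

lemma lpnn_update_V_of_le (d : ℕ → ℕ)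
    (W : ∀ ℓ : ℕ, Matrix (Fin (d (ℓ + 1))) (Fin (d ℓ)) ℝ)
    (V : ∀ ℓ : ℕ, Matrix (Fin (d (ℓ + 1))) (Fin (d 0)) ℝ)
    (x : Fin (d 0) → ℝ) (ℓ₀ : ℕ) (M : Matrix (Fin (d (ℓ₀ + 1))) (Fin (d 0)) ℝ) :
    ∀ K : ℕ, K ≤ ℓ₀ → lpnn d W (Function.update V ℓ₀ M) x K = lpnn d W V x K
  | 0, _ => rfl
  | (K + 1), h => by
      have hK : K ≠ ℓ₀ := by omega
      simp [lpnn, Function.update_of_ne hK,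
        lpnn_update_V_of_le d W V x ℓ₀ M K (by omega)]

lemma lpnn_update_W_lin (d : ℕ → ℕ)
    (W : ∀ ℓ : ℕ, Matrix (Fin (d (ℓ + 1))) (Fin (d ℓ)) ℝ)
    (V : ∀ ℓ : ℕ, Matrix (Fin (d (ℓ + 1))) (Fin (d 0)) ℝ)
    (x : Fin (d 0) → ℝ) (ℓ₀ : ℕ) (M N : Matrix (Fin (d (ℓ₀ + 1))) (Fin (d ℓ₀)) ℝ)
    (a b : ℝ) :
    ∀ L : ℕ, ℓ₀ < L →
      lpnn d (Function.update W ℓ₀ (a • M + b • N)) V x L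
        = a • lpnn d (Function.update W ℓ₀ M) V x L
          + b • lpnn d (Function.update W ℓ₀ N) V x L
  | (L + 1), h => by
      rcases eq_or_lt_of_le (Nat.lt_succ_iff.mp h) with rfl | h'
      · show (Function.update W ℓ₀ (a • M + b • N) ℓ₀).mulVec _ * _ = _
        rw [Function.update_self]
        rw [lpnn_update_W_of_le d W V x ℓ₀ (a • M + b • N) ℓ₀ le_rfl]
        have h1 := lpnn_update_W_of_le d W V x ℓ₀ M ℓ₀ le_rfl
        have h2 := lpnn_update_W_of_le d W V x ℓ₀ N ℓ₀ le_rfl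
        show _ = a • ((Function.update W ℓ₀ M ℓ₀).mulVec _ * _)
          + b • ((Function.update W ℓ₀ N ℓ₀).mulVec _ * _)
        rw [Function.update_self, Function.update_self, h1, h2]
        rw [Matrix.add_mulVec, Matrix.smul_mulVec, Matrix.smul_mulVec,
          add_mul, smul_mul_assoc, smul_mul_assoc]
      · have hL : L ≠ ℓ₀ := by omega
        show (Function.update W ℓ₀ _ L).mulVec _ * _ = _
        rw [Function.update_of_ne hL, lpnn_update_W_lin d W V x ℓ₀ M N a b L h']
        show _ = a • ((Function.update W ℓ₀ M L).mulVec _ * _)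
          + b • ((Function.update W ℓ₀ N L).mulVec _ * _)
        rw [Function.update_of_ne hL, Function.update_of_ne hL]
        rw [Matrix.mulVec_add, Matrix.mulVec_smul, Matrix.mulVec_smul,
          add_mul, smul_mul_assoc, smul_mul_assoc]

lemma lpnn_update_V_lin (d : ℕ → ℕ)
    (W : ∀ ℓ : ℕ, Matrix (Fin (d (ℓ + 1))) (Fin (d ℓ)) ℝ)
    (V : ∀ ℓ : ℕ, Matrix (Fin (d (ℓ + 1))) (Fin (d 0)) ℝ)
    (x : Fin (d 0) → ℝ) (ℓ₀ : ℕ) (M N : Matrix (Fin (d (ℓ₀ + 1))) (Fin (d 0)) ℝ)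
    (a b : ℝ) :
    ∀ L : ℕ, ℓ₀ < L →
      lpnn d W (Function.update V ℓ₀ (a • M + b • N)) x L
        = a • lpnn d W (Function.update V ℓ₀ M) x L
          + b • lpnn d W (Function.update V ℓ₀ N) x L
  | (L + 1), h => by
      rcases eq_or_lt_of_le (Nat.lt_succ_iff.mp h) with rfl | h'
      · show _ * (Function.update V ℓ₀ (a • M + b • N) ℓ₀).mulVec x = _
        rw [Function.update_self]
        rw [lpnn_update_V_of_le d W V x ℓ₀ (a • M + b • N) ℓ₀ le_rfl]
        have h1 := lpnn_update_V_of_le d W V x ℓ₀ M ℓ₀ le_rfl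
        have h2 := lpnn_update_V_of_le d W V x ℓ₀ N ℓ₀ le_rfl
        show _ = a • (_ * (Function.update V ℓ₀ M ℓ₀).mulVec x)
          + b • (_ * (Function.update V ℓ₀ N ℓ₀).mulVec x)
        rw [Function.update_self, Function.update_self, h1, h2]
        rw [Matrix.add_mulVec, Matrix.smul_mulVec, Matrix.smul_mulVec,
          mul_add, mul_smul_comm, mul_smul_comm]
      · have hL : L ≠ ℓ₀ := by omega
        show _ * (Function.update V ℓ₀ _ L).mulVec x = _
        rw [Function.update_of_ne hL, lpnn_update_V_lin d W V x ℓ₀ M N a b L h']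
        show _ = a • ((W L).mulVec _ * (Function.update V ℓ₀ M L).mulVec x)
          + b • ((W L).mulVec _ * (Function.update V ℓ₀ N L).mulVec x)
        rw [Function.update_of_ne hL, Function.update_of_ne hL]
        rw [Matrix.mulVec_add, Matrix.mulVec_smul, Matrix.mulVec_smul,
          add_mul, smul_mul_assoc, smul_mul_assoc]

/-- if the loss `h ↦ f(h, y)` is convex for every label `y`, then the
LPNN training objective is multiconvex: for fixed input `x`, label `y`, and layer
index, the objective is convex as a function of the weight matrix `W^{ℓ₀}`
(resp. `V^{ℓ₀}`) of that layer, all other weights held fixed. -/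
theorem lpnn_loss_multiconvex {Y : Type*} (d : ℕ → ℕ)
    (W : ∀ ℓ : ℕ, Matrix (Fin (d (ℓ + 1))) (Fin (d ℓ)) ℝ)
    (V : ∀ ℓ : ℕ, Matrix (Fin (d (ℓ + 1))) (Fin (d 0)) ℝ)
    (x : Fin (d 0) → ℝ) (L : ℕ)
    (f : (Fin (d L) → ℝ) → Y → ℝ)
    (hf : ∀ y : Y, ConvexOn ℝ Set.univ (fun h => f h y))
    (y : Y) (ℓ₀ : ℕ) (hℓ₀ : ℓ₀ < L) :
    ConvexOn ℝ Set.univ (fun M : Matrix (Fin (d (ℓ₀ + 1))) (Fin (d ℓ₀)) ℝ =>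
        f (lpnn d (Function.update W ℓ₀ M) V x L) y) ∧
    ConvexOn ℝ Set.univ (fun M : Matrix (Fin (d (ℓ₀ + 1))) (Fin (d 0)) ℝ =>
        f (lpnn d W (Function.update V ℓ₀ M) x L) y) := by
  constructor
  · refine ⟨convex_univ, ?_⟩
    intro M _ N _ a b ha hb hab
    simp only
    rw [lpnn_update_W_lin d W V x ℓ₀ M N a b L hℓ₀]
    exact (hf y).2 (Set.mem_univ _) (Set.mem_univ _) ha hb hab
  · refine ⟨convex_univ, ?_⟩
    intro M _ N _ a b ha hb hab
    simp only
    rw [lpnn_update_V_lin d W V x ℓ₀ M N a b L hℓ₀]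
    exact (hf y).2 (Set.mem_univ _) (Set.mem_univ _) ha hb hab
end

section
/- The second moments of an LPNN's hidden layers under independent random weights satisfy a layer-wise recursion: let (W^1, …, W^L, V^1, …, V^L) be mutually independent random matrices whose entries all lie in L^{4L}, fix x ∈ ℝ^{d_0}, and define Σ^0 = x x^⊤ and Σ^ℓ = E[h^ℓ(x) h^ℓ(x)^⊤] for ℓ = 1, …, L. Then each Σ^ℓ is well defined and for all ℓ ≥ 1 and indices i, j: Σ^ℓ_{ij} = ( x^⊤ E[(V^ℓ_i)^⊤ V^ℓ_j] x ) · trace( E[(W^ℓ_i)^⊤ W^ℓ_j] Σ^{ℓ-1} ), where W^ℓ_i and V^ℓ_i denote the i-th rows of W^ℓ and V^ℓ viewed as 1 × d_{ℓ-1} and 1 × d_0 matrices respectively. -/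
open Matrix

open MeasureTheory ProbabilityTheory

/-- The space in which the random weight matrix indexed by `Sum.inl ℓ`
(a `W`-matrix) or `Sum.inr ℓ` (a `V`-matrix) lives, for layers `ℓ : Fin L`. -/
def lpnnWeightSpace (d : ℕ → ℕ) (L : ℕ) : Fin L ⊕ Fin L → Type
  | .inl ℓ => Fin (d (ℓ + 1)) → Fin (d ℓ) → ℝ
  | .inr ℓ => Fin (d (ℓ + 1)) → Fin (d 0) → ℝ

instance (d : ℕ → ℕ) (L : ℕ) : ∀ k, MeasurableSpace (lpnnWeightSpace d L k)
  | .inl _ => inferInstanceAs (MeasurableSpace (_ → _ → ℝ))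
  | .inr _ => inferInstanceAs (MeasurableSpace (_ → _ → ℝ))

/-- The random LPNN output `h^ℓ(x)(ω)` for random weights `W, V`. -/
def lpnnRand {Ω : Type*} (d : ℕ → ℕ)
    (W : ∀ ℓ : ℕ, Ω → Fin (d (ℓ + 1)) → Fin (d ℓ) → ℝ)
    (V : ∀ ℓ : ℕ, Ω → Fin (d (ℓ + 1)) → Fin (d 0) → ℝ)
    (x : Fin (d 0) → ℝ) (ℓ : ℕ) (ω : Ω) : Fin (d ℓ) → ℝ :=
  lpnn d (fun ℓ' => Matrix.of (W ℓ' ω)) (fun ℓ' => Matrix.of (V ℓ' ω)) x ℓ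

/-- The second-moment matrices `Σ^ℓ`: `Σ^0 = x xᵀ` and
`Σ^ℓ = E[h^ℓ(x) h^ℓ(x)ᵀ]` for `ℓ ≥ 1`. -/
noncomputable def lpnnSecondMoment {Ω : Type*} [MeasurableSpace Ω] (μ : Measure Ω)
    (d : ℕ → ℕ)
    (W : ∀ ℓ : ℕ, Ω → Fin (d (ℓ + 1)) → Fin (d ℓ) → ℝ)
    (V : ∀ ℓ : ℕ, Ω → Fin (d (ℓ + 1)) → Fin (d 0) → ℝ)
    (x : Fin (d 0) → ℝ) : ∀ ℓ : ℕ, Matrix (Fin (d ℓ)) (Fin (d ℓ)) ℝ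
  | 0 => Matrix.of fun a b => x a * x b
  | (ℓ + 1) => Matrix.of fun a b =>
      ∫ ω, lpnnRand d W V x (ℓ + 1) ω a * lpnnRand d W V x (ℓ + 1) ω b ∂μ

section AuxLemmas

open scoped ENNReal

lemma lpnn_congr (d : ℕ → ℕ) {W W' : ∀ ℓ : ℕ, Matrix (Fin (d (ℓ + 1))) (Fin (d ℓ)) ℝ}
    {V V' : ∀ ℓ : ℕ, Matrix (Fin (d (ℓ + 1))) (Fin (d 0)) ℝ}
    (x : Fin (d 0) → ℝ) (ℓ : ℕ) (h : ∀ k < ℓ, W k = W' k ∧ V k = V' k) :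
    lpnn d W V x ℓ = lpnn d W' V' x ℓ := by
  induction ℓ with
  | zero => rfl
  | succ n ih =>
    have h1 := h n (Nat.lt_succ_self n)
    rw [lpnn, lpnn, ih (fun k hk => h k (hk.trans (Nat.lt_succ_self n))), h1.1, h1.2]

lemma lpnn_apply_succ (d : ℕ → ℕ) (W : ∀ ℓ : ℕ, Matrix (Fin (ℓ + 1 |> d)) (Fin (d ℓ)) ℝ)
    (V : ∀ ℓ : ℕ, Matrix (Fin (ℓ + 1 |> d)) (Fin (d 0)) ℝ)
    (x : Fin (d 0) → ℝ) (ℓ : ℕ) (a : Fin (ℓ + 1 |> d)) :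
    lpnn d W V x (ℓ + 1) a =
      (∑ c, W ℓ a c * lpnn d W V x ℓ c) * (∑ e, V ℓ a e * x e) := by
  rw [lpnn]; rfl

variable {Ω : Type*} [MeasurableSpace Ω] {μ : MeasureTheory.Measure Ω} {L : ℕ}

open MeasureTheory ProbabilityTheory

lemma recipN (hL : L ≠ 0) (m : ℕ) : 1 / ((4 * L : ℝ≥0∞) / m) = m / (4 * L : ℝ≥0∞) := by
  rw [one_div, ENNReal.inv_div]
  · left; exact ENNReal.natCast_ne_top m
  · right; simp [hL]

lemma exp_add (hL : L ≠ 0) (m n : ℕ) :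
    1 / ((4 * L : ℝ≥0∞) / ((m + n : ℕ) : ℝ≥0∞)) =
      1 / ((4 * L : ℝ≥0∞) / m) + 1 / ((4 * L : ℝ≥0∞) / n) := by
  rw [recipN hL, recipN hL, recipN hL, ENNReal.div_add_div_same]
  push_cast
  ring_nf

lemma memLp_mul_aux (hL : L ≠ 0) {f g : Ω → ℝ} {m n : ℕ}
    (hf : MemLp f ((4 * L : ℝ≥0∞) / m) μ) (hg : MemLp g ((4 * L : ℝ≥0∞) / n) μ) :
    MemLp (fun ω => f ω * g ω) ((4 * L : ℝ≥0∞) / ((m + n : ℕ) : ℝ≥0∞)) μ :=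
  MemLp.smul (𝕜 := ℝ) (hpqr := ⟨by simpa only [one_div] using (exp_add hL m n).symm⟩) hg hf

/-- The basic `MemLp` bound for hidden units. -/
lemma lpnn_memLp [IsProbabilityMeasure μ] (d : ℕ → ℕ)
    (W : ∀ ℓ : ℕ, Ω → Fin (ℓ + 1 |> d) → Fin (d ℓ) → ℝ)
    (V : ∀ ℓ : ℕ, Ω → Fin (ℓ + 1 |> d) → Fin (d 0) → ℝ)
    (hW : ∀ ℓ < L, ∀ i j, MemLp (fun ω => W ℓ ω i j) (4 * L) μ)
    (hV : ∀ ℓ < L, ∀ i j, MemLp (fun ω => V ℓ ω i j) (4 * L) μ)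
    (x : Fin (d 0) → ℝ) :
    ∀ ℓ ≤ L, ∀ a, MemLp (fun ω => lpnnRand d W V x ℓ ω a)
      ((4 * L : ℝ≥0∞) / ((2 * ℓ : ℕ) : ℝ≥0∞)) μ := by
  intro ℓ hℓ
  induction ℓ with
  | zero =>
    intro a
    exact memLp_const (x a)
  | succ n ih =>
    intro a
    have hL : L ≠ 0 := by omega
    have hn : n < L := by omega
    have key : (fun ω => lpnnRand d W V x (n + 1) ω a) =
        fun ω => (∑ c, W n ω a c * lpnnRand d W V x n ω c) * (∑ e, V n ω a e * x e) := by
      funext ω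
      exact lpnn_apply_succ d _ _ x n a
    rw [key]
    have h1 : MemLp (fun ω => ∑ c, W n ω a c * lpnnRand d W V x n ω c)
        ((4 * L : ℝ≥0∞) / ((1 + 2 * n : ℕ) : ℝ≥0∞)) μ := by
      apply memLp_finset_sum
      intro c _
      exact memLp_mul_aux hL (by simpa using hW n hn a c) (ih (by omega) c)
    have h2 : MemLp (fun ω => ∑ e, V n ω a e * x e) ((4 * L : ℝ≥0∞) / ((1 : ℕ) : ℝ≥0∞)) μ := by
      apply memLp_finset_sum
      intro e _
      have := (hV n hn a e).const_mul (x e)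
      have heq : (fun ω => x e * V n ω a e) = fun ω => V n ω a e * x e := by
        funext ω; ring
      rw [heq] at this
      simpa using this
    have he : (2 * (n + 1)) = ((1 + 2 * n) + 1) := by omega
    rw [he]
    exact memLp_mul_aux hL h1 h2

end AuxLemmas

section AuxInt
open scoped ENNReal
open MeasureTheory ProbabilityTheory
variable {Ω : Type*} [MeasurableSpace Ω] {μ : MeasureTheory.Measure Ω} {L : ℕ}

lemma lpnn_integrable [IsProbabilityMeasure μ] (d : ℕ → ℕ)
    (W : ∀ ℓ : ℕ, Ω → Fin (ℓ + 1 |> d) → Fin (d ℓ) → ℝ)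
    (V : ∀ ℓ : ℕ, Ω → Fin (ℓ + 1 |> d) → Fin (d 0) → ℝ)
    (hW : ∀ ℓ < L, ∀ i j, MemLp (fun ω => W ℓ ω i j) (4 * L) μ)
    (hV : ∀ ℓ < L, ∀ i j, MemLp (fun ω => V ℓ ω i j) (4 * L) μ)
    (x : Fin (d 0) → ℝ) :
    ∀ ℓ ≤ L, ∀ a b,
      Integrable (fun ω => lpnnRand d W V x ℓ ω a * lpnnRand d W V x ℓ ω b) μ := by
  intro ℓ hℓ a b
  match ℓ, hℓ with
  | 0, _ => exact integrable_const (x a * x b)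
  | (n + 1), hℓ =>
    have hL : L ≠ 0 := by omega
    have hmem := memLp_mul_aux hL
      (lpnn_memLp d W V hW hV x (n+1) hℓ a) (lpnn_memLp d W V hW hV x (n+1) hℓ b)
    refine hmem.integrable ?_
    rw [ENNReal.le_div_iff_mul_le (Or.inl ?_) (Or.inl (ENNReal.natCast_ne_top _)), one_mul]
    · push_cast
      have : (n + 1 : ℝ≥0∞) ≤ (L : ℝ≥0∞) := by exact_mod_cast hℓ
      calc (2 * (↑n + 1) + 2 * (↑n + 1) : ℝ≥0∞) = 4 * (↑n + 1) := by ring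
      _ ≤ 4 * (L : ℝ≥0∞) := by gcongr
    · simp
end AuxInt

section AuxIndep
open scoped ENNReal
open MeasureTheory ProbabilityTheory

variable (d : ℕ → ℕ) (L : ℕ)

def lpnnZero : ∀ k : Fin L ⊕ Fin L, lpnnWeightSpace d L k
  | .inl _ => fun _ _ => 0
  | .inr _ => fun _ _ => 0

def lpnnExt (S : Finset (Fin L ⊕ Fin L)) (g : ∀ i : S, lpnnWeightSpace d L i) :
    ∀ k, lpnnWeightSpace d L k :=
  fun k => if h : k ∈ S then g ⟨k, h⟩ else lpnnZero d L k

def lpnnPickW (g : ∀ k, lpnnWeightSpace d L k) (k : ℕ) :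
    Matrix (Fin (d (k + 1))) (Fin (d k)) ℝ :=
  if h : k < L then Matrix.of (g (.inl ⟨k, h⟩)) else 0

def lpnnPickV (g : ∀ k, lpnnWeightSpace d L k) (k : ℕ) :
    Matrix (Fin (d (k + 1))) (Fin (d 0)) ℝ :=
  if h : k < L then Matrix.of (g (.inr ⟨k, h⟩)) else 0

def lpnnH (x : Fin (d 0) → ℝ) (ℓ : ℕ) (g : ∀ k, lpnnWeightSpace d L k) : Fin (d ℓ) → ℝ :=
  lpnn d (lpnnPickW d L g) (lpnnPickV d L g) x ℓ

lemma measurable_lpnnExt (S : Finset (Fin L ⊕ Fin L)) : Measurable (lpnnExt d L S) := by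
  apply measurable_pi_lambda
  intro k
  by_cases h : k ∈ S
  · simp only [lpnnExt, dif_pos h]
    exact measurable_pi_apply _
  · simp only [lpnnExt, dif_neg h]
    exact measurable_const

lemma measurable_lpnnPickW_entry (k : ℕ) (a : Fin (d (k + 1))) (c : Fin (d k)) :
    Measurable (fun g : ∀ k', lpnnWeightSpace d L k' => lpnnPickW d L g k a c) := by
  by_cases h : k < L
  · simp only [lpnnPickW, dif_pos h]
    exact (measurable_pi_apply c).comp ((measurable_pi_apply a).comp (measurable_pi_apply _))
  · simp only [lpnnPickW, dif_neg h]
    exact measurable_const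

lemma measurable_lpnnPickV_entry (k : ℕ) (a : Fin (d (k + 1))) (c : Fin (d 0)) :
    Measurable (fun g : ∀ k', lpnnWeightSpace d L k' => lpnnPickV d L g k a c) := by
  by_cases h : k < L
  · simp only [lpnnPickV, dif_pos h]
    exact (measurable_pi_apply c).comp ((measurable_pi_apply a).comp (measurable_pi_apply _))
  · simp only [lpnnPickV, dif_neg h]
    exact measurable_const

lemma measurable_lpnnH (x : Fin (d 0) → ℝ) :
    ∀ (ℓ : ℕ) (a : Fin (d ℓ)), Measurable (fun g : ∀ k, lpnnWeightSpace d L k => lpnnH d L x ℓ g a) := by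
  intro ℓ
  induction ℓ with
  | zero => intro a; exact measurable_const
  | succ n ih =>
    intro a
    have key : (fun g : ∀ k, lpnnWeightSpace d L k => lpnnH d L x (n + 1) g a) =
        fun g => (∑ c, lpnnPickW d L g n a c * lpnnH d L x n g c) *
          (∑ e, lpnnPickV d L g n a e * x e) := by
      funext g
      exact lpnn_apply_succ d _ _ x n a
    rw [key]
    apply Measurable.mul
    · apply Finset.measurable_sum
      intro c _
      exact (measurable_lpnnPickW_entry d L n a c).mul (ih c)
    · apply Finset.measurable_sum
      intro e _
      exact (measurable_lpnnPickV_entry d L n a e).mul measurable_const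

end AuxIndep

section AuxEq
open scoped ENNReal
open MeasureTheory ProbabilityTheory

variable (d : ℕ → ℕ) (L : ℕ) {Ω : Type*}

lemma lpnnH_ext_eq
    (W : ∀ ℓ : ℕ, Ω → Fin (ℓ + 1 |> d) → Fin (d ℓ) → ℝ)
    (V : ∀ ℓ : ℕ, Ω → Fin (ℓ + 1 |> d) → Fin (d 0) → ℝ)
    (F : ∀ k, Ω → lpnnWeightSpace d L k)
    (hFW : ∀ m : Fin L, F (.inl m) = W (m : ℕ))
    (hFV : ∀ m : Fin L, F (.inr m) = V (m : ℕ))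
    (x : Fin (d 0) → ℝ) (ℓ : ℕ) (hℓ : ℓ ≤ L) (S : Finset (Fin L ⊕ Fin L))
    (hS : ∀ m : Fin L, (m : ℕ) < ℓ → Sum.inl m ∈ S ∧ Sum.inr m ∈ S) (ω : Ω) :
    lpnnH d L x ℓ (lpnnExt d L S (fun i => F i ω)) = lpnnRand d W V x ℓ ω := by
  unfold lpnnH lpnnRand
  apply lpnn_congr
  intro k hk
  have hkL : k < L := lt_of_lt_of_le hk hℓ
  constructor
  · have hmem := (hS ⟨k, hkL⟩ hk).1
    simp only [lpnnPickW, dif_pos hkL, lpnnExt, dif_pos hmem]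
    rw [hFW ⟨k, hkL⟩]
  · have hmem := (hS ⟨k, hkL⟩ hk).2
    simp only [lpnnPickV, dif_pos hkL, lpnnExt, dif_pos hmem]
    rw [hFV ⟨k, hkL⟩]

end AuxEq

section AuxTerm
open scoped ENNReal
open MeasureTheory ProbabilityTheory

variable {Ω : Type*} [MeasurableSpace Ω] {μ : MeasureTheory.Measure Ω}

lemma lpnn_term_integral [IsProbabilityMeasure μ] (d : ℕ → ℕ) (L : ℕ)
    (W : ∀ ℓ : ℕ, Ω → Fin (ℓ + 1 |> d) → Fin (d ℓ) → ℝ)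
    (V : ∀ ℓ : ℕ, Ω → Fin (ℓ + 1 |> d) → Fin (d 0) → ℝ)
    (hindep : iIndepFun
      (fun k : Fin L ⊕ Fin L => match k with
        | .inl ℓ => W ℓ
        | .inr ℓ => V ℓ : ∀ k, Ω → lpnnWeightSpace d L k) μ)
    (hWm : ∀ ℓ < L, Measurable (W ℓ))
    (hVm : ∀ ℓ < L, Measurable (V ℓ))
    (hWam : ∀ ℓ < L, ∀ i j, AEStronglyMeasurable (fun ω => W ℓ ω i j) μ)
    (hVam : ∀ ℓ < L, ∀ i j, AEStronglyMeasurable (fun ω => V ℓ ω i j) μ)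
    (x : Fin (d 0) → ℝ)
    (hham : ∀ ℓ ≤ L, ∀ a, AEStronglyMeasurable (fun ω => lpnnRand d W V x ℓ ω a) μ)
    (ℓ : ℕ) (hℓ : ℓ < L) (i j : Fin (d (ℓ + 1)))
    (a b : Fin (d ℓ)) (p q : Fin (d 0)) :
    ∫ ω, (W ℓ ω i a * W ℓ ω j b) *
        ((V ℓ ω i p * V ℓ ω j q) * (lpnnRand d W V x ℓ ω a * lpnnRand d W V x ℓ ω b)) ∂μ
      = (∫ ω, W ℓ ω i a * W ℓ ω j b ∂μ) *
        ((∫ ω, V ℓ ω i p * V ℓ ω j q ∂μ) *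
          (∫ ω, lpnnRand d W V x ℓ ω a * lpnnRand d W V x ℓ ω b ∂μ)) := by
  classical
  set F : ∀ k : Fin L ⊕ Fin L, Ω → lpnnWeightSpace d L k :=
    (fun k : Fin L ⊕ Fin L => match k with
      | .inl m => W m
      | .inr m => V m) with hF
  have hFm : ∀ k, Measurable (F k) := by
    rintro (m | m)
    · exact hWm m m.isLt
    · exact hVm m m.isLt
  set ℓ' : Fin L := ⟨ℓ, hℓ⟩ with hℓ'
  set Sf : Finset (Fin L ⊕ Fin L) :=
    Finset.univ.filter (fun k => Sum.elim (fun m : Fin L => (m : ℕ))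
      (fun m : Fin L => (m : ℕ)) k < ℓ) with hSf
  set T : Finset (Fin L ⊕ Fin L) := insert (Sum.inr ℓ') Sf with hT
  have hST1 : Disjoint ({Sum.inl ℓ'} : Finset (Fin L ⊕ Fin L)) T := by
    simp only [hT, hSf, Finset.disjoint_singleton_left, Finset.mem_insert, Finset.mem_filter,
      Finset.mem_univ, true_and, Sum.elim_inl]
    push_neg
    exact ⟨by simp, by simp [hℓ']⟩
  have hST2 : Disjoint ({Sum.inr ℓ'} : Finset (Fin L ⊕ Fin L)) Sf := by
    simp only [hSf, Finset.disjoint_singleton_left, Finset.mem_filter,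
      Finset.mem_univ, true_and, Sum.elim_inr]
    simp [hℓ']
  -- the hidden-layer pair as a function of the earlier weights
  have hSfmem : ∀ m : Fin L, (m : ℕ) < ℓ → Sum.inl m ∈ Sf ∧ Sum.inr m ∈ Sf := by
    intro m hm
    constructor <;> simp [hSf, hm]
  have hTmem : ∀ m : Fin L, (m : ℕ) < ℓ → Sum.inl m ∈ T ∧ Sum.inr m ∈ T := by
    intro m hm
    have := hSfmem m hm
    exact ⟨Finset.mem_insert_of_mem this.1, Finset.mem_insert_of_mem this.2⟩
  -- second factorization : V-pair independent of h-pair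
  have indep2 : IndepFun (fun ω => V ℓ ω i p * V ℓ ω j q)
      (fun ω => lpnnRand d W V x ℓ ω a * lpnnRand d W V x ℓ ω b) μ := by
    have base := hindep.indepFun_finset {Sum.inr ℓ'} Sf hST2 hFm
    have hmem : Sum.inr ℓ' ∈ ({Sum.inr ℓ'} : Finset (Fin L ⊕ Fin L)) :=
      Finset.mem_singleton_self _
    let φ : (∀ k : ({Sum.inr ℓ'} : Finset (Fin L ⊕ Fin L)), lpnnWeightSpace d L k) → ℝ :=
      fun g => g ⟨Sum.inr ℓ', hmem⟩ i p * g ⟨Sum.inr ℓ', hmem⟩ j q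
    let ψ : (∀ k : (Sf : Finset (Fin L ⊕ Fin L)), lpnnWeightSpace d L k) → ℝ :=
      fun g => lpnnH d L x ℓ (lpnnExt d L Sf g) a * lpnnH d L x ℓ (lpnnExt d L Sf g) b
    have hφ : Measurable φ := by
      apply Measurable.mul <;>
        exact (measurable_pi_apply _).comp ((measurable_pi_apply _).comp (measurable_pi_apply _))
    have hψ : Measurable ψ := by
      apply Measurable.mul <;>
        exact (measurable_lpnnH d L x ℓ _).comp (measurable_lpnnExt d L Sf)
    have := base.comp hφ hψ
    have e1 : (φ ∘ fun ω (k : ({Sum.inr ℓ'} : Finset (Fin L ⊕ Fin L))) => F k ω) =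
        fun ω => V ℓ ω i p * V ℓ ω j q := rfl
    have e2 : (ψ ∘ fun ω (k : (Sf : Finset (Fin L ⊕ Fin L))) => F k ω) =
        fun ω => lpnnRand d W V x ℓ ω a * lpnnRand d W V x ℓ ω b := by
      funext ω
      have := lpnnH_ext_eq d L W V F (fun m => rfl) (fun m => rfl) x ℓ hℓ.le Sf hSfmem ω
      simp only [Function.comp_apply, ψ]
      rw [this]
    rw [e1, e2] at this
    exact this
  -- first factorization : W-pair independent of the rest
  have indep1 : IndepFun (fun ω => W ℓ ω i a * W ℓ ω j b)
      (fun ω => (V ℓ ω i p * V ℓ ω j q) *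
        (lpnnRand d W V x ℓ ω a * lpnnRand d W V x ℓ ω b)) μ := by
    have base := hindep.indepFun_finset {Sum.inl ℓ'} T hST1 hFm
    have hmem : Sum.inl ℓ' ∈ ({Sum.inl ℓ'} : Finset (Fin L ⊕ Fin L)) :=
      Finset.mem_singleton_self _
    have hmemT : Sum.inr ℓ' ∈ T := Finset.mem_insert_self _ _
    let φ : (∀ k : ({Sum.inl ℓ'} : Finset (Fin L ⊕ Fin L)), lpnnWeightSpace d L k) → ℝ :=
      fun g => g ⟨Sum.inl ℓ', hmem⟩ i a * g ⟨Sum.inl ℓ', hmem⟩ j b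
    let ψ : (∀ k : (T : Finset (Fin L ⊕ Fin L)), lpnnWeightSpace d L k) → ℝ :=
      fun g => (g ⟨Sum.inr ℓ', hmemT⟩ i p * g ⟨Sum.inr ℓ', hmemT⟩ j q) *
        (lpnnH d L x ℓ (lpnnExt d L T g) a * lpnnH d L x ℓ (lpnnExt d L T g) b)
    have hφ : Measurable φ := by
      apply Measurable.mul <;>
        exact (measurable_pi_apply _).comp ((measurable_pi_apply _).comp (measurable_pi_apply _))
    have hψ : Measurable ψ := by
      apply Measurable.mul
      · apply Measurable.mul <;>
          exact (measurable_pi_apply _).comp ((measurable_pi_apply _).comp (measurable_pi_apply _))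
      · apply Measurable.mul <;>
          exact (measurable_lpnnH d L x ℓ _).comp (measurable_lpnnExt d L T)
    have := base.comp hφ hψ
    have e1 : (φ ∘ fun ω (k : ({Sum.inl ℓ'} : Finset (Fin L ⊕ Fin L))) => F k ω) =
        fun ω => W ℓ ω i a * W ℓ ω j b := rfl
    have e2 : (ψ ∘ fun ω (k : (T : Finset (Fin L ⊕ Fin L))) => F k ω) =
        fun ω => (V ℓ ω i p * V ℓ ω j q) *
          (lpnnRand d W V x ℓ ω a * lpnnRand d W V x ℓ ω b) := by
      funext ω
      have := lpnnH_ext_eq d L W V F (fun m => rfl) (fun m => rfl) x ℓ hℓ.le T hTmem ω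
      simp only [Function.comp_apply, ψ]
      rw [this]
    rw [e1, e2] at this
    exact this
  have hWae : AEStronglyMeasurable (fun ω => W ℓ ω i a * W ℓ ω j b) μ :=
    (hWam ℓ hℓ i a).mul (hWam ℓ hℓ j b)
  have hVae : AEStronglyMeasurable (fun ω => V ℓ ω i p * V ℓ ω j q) μ :=
    (hVam ℓ hℓ i p).mul (hVam ℓ hℓ j q)
  have hhae : AEStronglyMeasurable
      (fun ω => lpnnRand d W V x ℓ ω a * lpnnRand d W V x ℓ ω b) μ :=
    (hham ℓ hℓ.le a).mul (hham ℓ hℓ.le b)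
  rw [indep1.integral_fun_mul_eq_mul_integral hWae (hVae.mul hhae), indep2.integral_fun_mul_eq_mul_integral hVae hhae]

end AuxTerm

section AuxMain
open scoped ENNReal
open MeasureTheory ProbabilityTheory

variable {Ω : Type*} [MeasurableSpace Ω] {μ : MeasureTheory.Measure Ω}

lemma sum_comm4 {M : Type*} [AddCommMonoid M] {α β γ δ : Type*}
    [Fintype α] [Fintype β] [Fintype γ] [Fintype δ] (f : α → β → γ → δ → M) :
    ∑ a, ∑ b, ∑ p, ∑ q, f a b p q = ∑ p, ∑ q, ∑ a, ∑ b, f a b p q := by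
  calc ∑ a, ∑ b, ∑ p, ∑ q, f a b p q
      = ∑ a, ∑ p, ∑ b, ∑ q, f a b p q :=
        Finset.sum_congr rfl fun a _ => Finset.sum_comm
    _ = ∑ p, ∑ a, ∑ b, ∑ q, f a b p q := Finset.sum_comm
    _ = ∑ p, ∑ a, ∑ q, ∑ b, f a b p q :=
        Finset.sum_congr rfl fun p _ => Finset.sum_congr rfl fun a _ => Finset.sum_comm
    _ = ∑ p, ∑ q, ∑ a, ∑ b, f a b p q :=
        Finset.sum_congr rfl fun p _ => Finset.sum_comm

lemma lpnnSecondMoment_apply [IsProbabilityMeasure μ] (d : ℕ → ℕ)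
    (W : ∀ ℓ : ℕ, Ω → Fin (ℓ + 1 |> d) → Fin (d ℓ) → ℝ)
    (V : ∀ ℓ : ℕ, Ω → Fin (ℓ + 1 |> d) → Fin (d 0) → ℝ)
    (x : Fin (d 0) → ℝ) (ℓ : ℕ) (a b : Fin (d ℓ)) :
    lpnnSecondMoment μ d W V x ℓ a b
      = ∫ ω, lpnnRand d W V x ℓ ω a * lpnnRand d W V x ℓ ω b ∂μ := by
  cases ℓ with
  | zero =>
    simp only [lpnnSecondMoment, Matrix.of_apply]
    rw [show (fun ω => lpnnRand d W V x 0 ω a * lpnnRand d W V x 0 ω b)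
        = fun _ : Ω => x a * x b from rfl]
    simp [integral_const]
  | succ n => rfl

lemma lpnn_rec_measurable [IsProbabilityMeasure μ] (d : ℕ → ℕ) (L : ℕ)
    (W : ∀ ℓ : ℕ, Ω → Fin (ℓ + 1 |> d) → Fin (d ℓ) → ℝ)
    (V : ∀ ℓ : ℕ, Ω → Fin (ℓ + 1 |> d) → Fin (d 0) → ℝ)
    (hindep : iIndepFun
      (fun k : Fin L ⊕ Fin L => match k with
        | .inl ℓ => W ℓ
        | .inr ℓ => V ℓ : ∀ k, Ω → lpnnWeightSpace d L k) μ)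
    (hW : ∀ ℓ < L, ∀ i j, MemLp (fun ω => W ℓ ω i j) (4 * L) μ)
    (hV : ∀ ℓ < L, ∀ i j, MemLp (fun ω => V ℓ ω i j) (4 * L) μ)
    (hWm : ∀ ℓ < L, Measurable (W ℓ))
    (hVm : ∀ ℓ < L, Measurable (V ℓ))
    (x : Fin (d 0) → ℝ) (ℓ : ℕ) (hℓ : ℓ < L) (i j : Fin (d (ℓ + 1))) :
    lpnnSecondMoment μ d W V x (ℓ + 1) i j =
      (x ⬝ᵥ (Matrix.of fun a b => ∫ ω, V ℓ ω i a * V ℓ ω j b ∂μ).mulVec x) *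
        Matrix.trace ((Matrix.of fun a b => ∫ ω, W ℓ ω i a * W ℓ ω j b ∂μ) *
          lpnnSecondMoment μ d W V x ℓ) := by
  classical
  have hL : L ≠ 0 := by omega
  have hmem := lpnn_memLp d W V hW hV x
  have hham : ∀ k ≤ L, ∀ a, AEStronglyMeasurable (fun ω => lpnnRand d W V x k ω a) μ :=
    fun k hk a => (hmem k hk a).1
  set h : Ω → Fin (d ℓ) → ℝ := fun ω => lpnnRand d W V x ℓ ω with hh
  -- integrability of a single expansion term
  have hint : ∀ (a b : Fin (d ℓ)) (p q : Fin (d 0)),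
      Integrable (fun ω => (W ℓ ω i a * W ℓ ω j b) *
        ((V ℓ ω i p * V ℓ ω j q) * (h ω a * h ω b))) μ := by
    intro a b p q
    have hW1 : ∀ (i' : Fin (d (ℓ + 1))) (a' : Fin (d ℓ)),
        MemLp (fun ω => W ℓ ω i' a') ((4 * L : ℝ≥0∞) / ((1 : ℕ) : ℝ≥0∞)) μ :=
      fun i' a' => by simpa using hW ℓ hℓ i' a'
    have hV1 : ∀ (i' : Fin (d (ℓ + 1))) (p' : Fin (d 0)),
        MemLp (fun ω => V ℓ ω i' p') ((4 * L : ℝ≥0∞) / ((1 : ℕ) : ℝ≥0∞)) μ :=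
      fun i' p' => by simpa using hV ℓ hℓ i' p'
    have hWW := memLp_mul_aux hL (hW1 i a) (hW1 j b)
    have hVV := memLp_mul_aux hL (hV1 i p) (hV1 j q)
    have hhh := memLp_mul_aux hL (hmem ℓ hℓ.le a) (hmem ℓ hℓ.le b)
    have hVh := memLp_mul_aux hL hVV hhh
    have hall := memLp_mul_aux hL hWW hVh
    refine hall.integrable ?_
    rw [ENNReal.le_div_iff_mul_le (Or.inl ?_) (Or.inl (ENNReal.natCast_ne_top _)), one_mul]
    · push_cast
      have hle : (ℓ + 1 : ℝ≥0∞) ≤ (L : ℝ≥0∞) := by exact_mod_cast hℓ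
      calc ((2 : ℝ≥0∞) + (2 + (2 * ℓ + 2 * ℓ)) : ℝ≥0∞) = 4 * (↑ℓ + 1) := by ring
      _ ≤ 4 * (L : ℝ≥0∞) := by gcongr
    · positivity
  -- pointwise expansion of the integrand
  have expand : ∀ ω, lpnnRand d W V x (ℓ + 1) ω i * lpnnRand d W V x (ℓ + 1) ω j
      = ∑ a, ∑ b, ∑ p, ∑ q, (W ℓ ω i a * W ℓ ω j b) *
          ((V ℓ ω i p * V ℓ ω j q) * (h ω a * h ω b)) * (x p * x q) := by
    intro ω
    have e_i := lpnn_apply_succ d (fun k => Matrix.of (W k ω)) (fun k => Matrix.of (V k ω)) x ℓ i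
    have e_j := lpnn_apply_succ d (fun k => Matrix.of (W k ω)) (fun k => Matrix.of (V k ω)) x ℓ j
    rw [show lpnnRand d W V x (ℓ + 1) ω i
        = lpnn d (fun k => Matrix.of (W k ω)) (fun k => Matrix.of (V k ω)) x (ℓ + 1) i from rfl,
      show lpnnRand d W V x (ℓ + 1) ω j
        = lpnn d (fun k => Matrix.of (W k ω)) (fun k => Matrix.of (V k ω)) x (ℓ + 1) j from rfl,
      e_i, e_j, mul_mul_mul_comm, Finset.sum_mul_sum, Finset.sum_mul_sum]
    simp only [Finset.sum_mul, Finset.mul_sum]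
    refine Eq.trans ?_ (sum_comm4 fun a b p q => (W ℓ ω i a * W ℓ ω j b) *
      ((V ℓ ω i p * V ℓ ω j q) * (h ω a * h ω b)) * (x p * x q)).symm
    refine Finset.sum_congr rfl fun p _ => Finset.sum_congr rfl fun q _ =>
      Finset.sum_congr rfl fun a _ => Finset.sum_congr rfl fun b _ => ?_
    show (W ℓ ω i a * h ω a * (W ℓ ω j b * h ω b)) * (V ℓ ω i p * x p * (V ℓ ω j q * x q)) = _
    ring
  -- the quadruple-indexed term family
  set τ := Fin (d ℓ) × Fin (d ℓ) × Fin (d 0) × Fin (d 0)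
  set g : τ → Ω → ℝ := fun r ω =>
    (W ℓ ω i r.1 * W ℓ ω j r.2.1) *
      ((V ℓ ω i r.2.2.1 * V ℓ ω j r.2.2.2) * (h ω r.1 * h ω r.2.1)) *
      (x r.2.2.1 * x r.2.2.2) with hg
  have hgint : ∀ r : τ, Integrable (g r) μ := fun r =>
    (hint r.1 r.2.1 r.2.2.1 r.2.2.2).mul_const _
  have step1 : lpnnSecondMoment μ d W V x (ℓ + 1) i j = ∑ r : τ, ∫ ω, g r ω ∂μ := by
    rw [lpnnSecondMoment_apply]
    rw [integral_congr_ae (Filter.Eventually.of_forall fun ω => ?_)]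
    · exact integral_finset_sum _ fun r _ => hgint r
    · show lpnnRand d W V x (ℓ + 1) ω i * lpnnRand d W V x (ℓ + 1) ω j = ∑ r : τ, g r ω
      rw [expand ω]
      rw [Fintype.sum_prod_type (f := fun r : τ => g r ω)]
      refine Finset.sum_congr rfl fun a _ => ?_
      rw [Fintype.sum_prod_type]
      refine Finset.sum_congr rfl fun b _ => ?_
      rw [Fintype.sum_prod_type]
  -- evaluate each term
  have step2 : ∀ r : τ, ∫ ω, g r ω ∂μ =
      (∫ ω, W ℓ ω i r.1 * W ℓ ω j r.2.1 ∂μ) *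
        ((∫ ω, V ℓ ω i r.2.2.1 * V ℓ ω j r.2.2.2 ∂μ) *
          (∫ ω, h ω r.1 * h ω r.2.1 ∂μ)) * (x r.2.2.1 * x r.2.2.2) := by
    intro r
    rw [hg]
    rw [integral_mul_const]
    rw [lpnn_term_integral d L W V hindep hWm hVm (fun k hk a' b' => (hW k hk a' b').1)
      (fun k hk a' b' => (hV k hk a' b').1) x hham ℓ hℓ i j r.1 r.2.1 r.2.2.1 r.2.2.2]
  -- final algebra
  rw [step1]
  rw [Finset.sum_congr rfl fun r _ => step2 r]
  -- expand RHS into sums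
  rw [Matrix.trace]
  simp only [dotProduct, Matrix.mulVec, Matrix.diag_apply, Matrix.mul_apply,
    Matrix.of_apply, Finset.sum_mul, Finset.mul_sum]
  have hSig : ∀ a b : Fin (d ℓ), lpnnSecondMoment μ d W V x ℓ b a = ∫ ω, h ω a * h ω b ∂μ := by
    intro a b
    rw [lpnnSecondMoment_apply d W V x ℓ b a]
    exact integral_congr_ae (Filter.Eventually.of_forall fun ω => mul_comm _ _)
  rw [Fintype.sum_prod_type]
  refine Finset.sum_congr rfl fun a _ => ?_
  rw [Fintype.sum_prod_type]
  refine Finset.sum_congr rfl fun b _ => ?_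
  rw [Fintype.sum_prod_type]
  refine Finset.sum_congr rfl fun p _ => Finset.sum_congr rfl fun q _ => ?_
  rw [hSig a b]
  ring

end AuxMain

section AuxAe
open scoped ENNReal
open MeasureTheory ProbabilityTheory

variable {Ω : Type*} [MeasurableSpace Ω] {μ : MeasureTheory.Measure Ω}

lemma iIndepFun_congr_ae {ι : Type*} {β : ι → Type*} [m : ∀ i, MeasurableSpace (β i)]
    {f g : ∀ i, Ω → β i} (hf : iIndepFun f μ) (h : ∀ i, f i =ᵐ[μ] g i) :
    iIndepFun g μ := by
  classical
  rw [iIndepFun_iff_measure_inter_preimage_eq_mul] at hf ⊢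
  intro S sets H
  have h1 : ∀ i : ι, μ (g i ⁻¹' sets i) = μ (f i ⁻¹' sets i) := by
    intro i
    apply measure_congr
    filter_upwards [h i] with ω hω
    show (ω ∈ g i ⁻¹' sets i) = (ω ∈ f i ⁻¹' sets i)
    simp only [Set.mem_preimage, eq_iff_iff]
    rw [hω]
  have h2 : μ (⋂ i ∈ S, g i ⁻¹' sets i) = μ (⋂ i ∈ S, f i ⁻¹' sets i) := by
    apply measure_congr
    have hall : ∀ᵐ ω ∂μ, ∀ i ∈ S, f i ω = g i ω :=
      (MeasureTheory.ae_ball_iff S.countable_toSet).2 fun i _ => h i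
    filter_upwards [hall] with ω hω
    show (ω ∈ ⋂ i ∈ S, g i ⁻¹' sets i) = (ω ∈ ⋂ i ∈ S, f i ⁻¹' sets i)
    simp only [Set.mem_iInter, Set.mem_preimage, eq_iff_iff]
    constructor
    · intro H' i hi
      rw [hω i hi]
      exact H' i hi
    · intro H' i hi
      rw [← hω i hi]
      exact H' i hi
  rw [h2, hf S H]
  exact Finset.prod_congr rfl fun i _ => (h1 i).symm

end AuxAe

/-- if the `2L` weight matrices of an LPNN are mutually independent
random matrices whose entries all lie in `L^{4L}`, then the second-moment matrices
`Σ^ℓ` are well defined (all products of hidden-unit pairs are integrable) and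
satisfy the layer-wise recursion
`Σ^ℓ_{ij} = (xᵀ E[(V^ℓ_i)ᵀ V^ℓ_j] x) ⋅ trace(E[(W^ℓ_i)ᵀ W^ℓ_j] Σ^{ℓ-1})`. -/
theorem lpnn_second_moment_recursion {Ω : Type*} [MeasurableSpace Ω] (μ : Measure Ω)
    [IsProbabilityMeasure μ] (d : ℕ → ℕ) (L : ℕ)
    (W : ∀ ℓ : ℕ, Ω → Fin (d (ℓ + 1)) → Fin (d ℓ) → ℝ)
    (V : ∀ ℓ : ℕ, Ω → Fin (d (ℓ + 1)) → Fin (d 0) → ℝ)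
    (hindep : iIndepFun
      (fun k : Fin L ⊕ Fin L => match k with
        | .inl ℓ => W ℓ
        | .inr ℓ => V ℓ : ∀ k, Ω → lpnnWeightSpace d L k) μ)
    (hW : ∀ ℓ < L, ∀ i j, MemLp (fun ω => W ℓ ω i j) (4 * L) μ)
    (hV : ∀ ℓ < L, ∀ i j, MemLp (fun ω => V ℓ ω i j) (4 * L) μ)
    (x : Fin (d 0) → ℝ) :
    (∀ ℓ ≤ L, ∀ a b,
      Integrable (fun ω => lpnnRand d W V x ℓ ω a * lpnnRand d W V x ℓ ω b) μ) ∧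
    (∀ ℓ < L, ∀ i j : Fin (d (ℓ + 1)),
      lpnnSecondMoment μ d W V x (ℓ + 1) i j =
        (x ⬝ᵥ (Matrix.of fun a b => ∫ ω, V ℓ ω i a * V ℓ ω j b ∂μ).mulVec x) *
          Matrix.trace ((Matrix.of fun a b => ∫ ω, W ℓ ω i a * W ℓ ω j b ∂μ) *
            lpnnSecondMoment μ d W V x ℓ)) := by
  classical
  refine ⟨lpnn_integrable d W V hW hV x, ?_⟩
  intro ℓ hℓ i j
  -- measurable modifications of the weights
  set W' : ∀ k : ℕ, Ω → Fin (d (k + 1)) → Fin (d k) → ℝ := fun k =>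
    if h : k < L then (fun ω i' j' => (hW k h i' j').1.mk (fun ω => W k ω i' j') ω)
    else W k with hW'def
  set V' : ∀ k : ℕ, Ω → Fin (d (k + 1)) → Fin (d 0) → ℝ := fun k =>
    if h : k < L then (fun ω i' j' => (hV k h i' j').1.mk (fun ω => V k ω i' j') ω)
    else V k with hV'def
  have hW'm : ∀ k < L, Measurable (W' k) := by
    intro k hk
    simp only [hW'def, dif_pos hk]
    exact measurable_pi_lambda _ fun i' => measurable_pi_lambda _ fun j' =>
      (hW k hk i' j').1.stronglyMeasurable_mk.measurable
  have hV'm : ∀ k < L, Measurable (V' k) := by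
    intro k hk
    simp only [hV'def, dif_pos hk]
    exact measurable_pi_lambda _ fun i' => measurable_pi_lambda _ fun j' =>
      (hV k hk i' j').1.stronglyMeasurable_mk.measurable
  have hWae : ∀ k, ∀ hk : k < L, ∀ i' j',
      (fun ω => W k ω i' j') =ᵐ[μ] fun ω => W' k ω i' j' := by
    intro k hk i' j'
    simp only [hW'def, dif_pos hk]
    exact (hW k hk i' j').1.ae_eq_mk
  have hVae : ∀ k, ∀ hk : k < L, ∀ i' j',
      (fun ω => V k ω i' j') =ᵐ[μ] fun ω => V' k ω i' j' := by
    intro k hk i' j'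
    simp only [hV'def, dif_pos hk]
    exact (hV k hk i' j').1.ae_eq_mk
  have hWfull : ∀ k, k < L → (W k) =ᵐ[μ] (W' k) := by
    intro k hk
    have : ∀ᵐ ω ∂μ, ∀ i', ∀ j', W k ω i' j' = W' k ω i' j' := by
      rw [MeasureTheory.ae_all_iff]
      intro i'
      rw [MeasureTheory.ae_all_iff]
      intro j'
      exact hWae k hk i' j'
    filter_upwards [this] with ω hω
    funext i' j'
    exact hω i' j'
  have hVfull : ∀ k, k < L → (V k) =ᵐ[μ] (V' k) := by
    intro k hk
    have : ∀ᵐ ω ∂μ, ∀ i', ∀ j', V k ω i' j' = V' k ω i' j' := by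
      rw [MeasureTheory.ae_all_iff]
      intro i'
      rw [MeasureTheory.ae_all_iff]
      intro j'
      exact hVae k hk i' j'
    filter_upwards [this] with ω hω
    funext i' j'
    exact hω i' j'
  have hW'p : ∀ k < L, ∀ i' j', MemLp (fun ω => W' k ω i' j') (4 * L) μ :=
    fun k hk i' j' => (hW k hk i' j').ae_eq (hWae k hk i' j')
  have hV'p : ∀ k < L, ∀ i' j', MemLp (fun ω => V' k ω i' j') (4 * L) μ :=
    fun k hk i' j' => (hV k hk i' j').ae_eq (hVae k hk i' j')
  have hind' : iIndepFun
      (fun k : Fin L ⊕ Fin L => match k with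
        | .inl m => W' m
        | .inr m => V' m : ∀ k, Ω → lpnnWeightSpace d L k) μ := by
    refine iIndepFun_congr_ae hindep ?_
    rintro (m | m)
    · exact hWfull m m.isLt
    · exact hVfull m m.isLt
  have hall : ∀ᵐ ω ∂μ, ∀ k, k < L → (W k ω = W' k ω ∧ V k ω = V' k ω) := by
    rw [MeasureTheory.ae_all_iff]
    intro k
    by_cases hk : k < L
    · filter_upwards [hWfull k hk, hVfull k hk] with ω h1 h2 _
      exact ⟨h1, h2⟩
    · filter_upwards with ω hk'
      exact absurd hk' hk
  have hrand : ∀ k, k ≤ L →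
      ∀ᵐ ω ∂μ, lpnnRand d W V x k ω = lpnnRand d W' V' x k ω := by
    intro k hk
    filter_upwards [hall] with ω hω
    unfold lpnnRand
    apply lpnn_congr
    intro m hm
    have h1 := hω m (lt_of_lt_of_le hm hk)
    exact ⟨by rw [h1.1], by rw [h1.2]⟩
  have hsm : ∀ k, k ≤ L →
      lpnnSecondMoment μ d W V x k = lpnnSecondMoment μ d W' V' x k := by
    intro k hk
    match k with
    | 0 => rfl
    | (n + 1) =>
      show (Matrix.of fun a b => ∫ ω, lpnnRand d W V x (n + 1) ω a *
          lpnnRand d W V x (n + 1) ω b ∂μ) = _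
      apply Matrix.ext
      intro a b
      simp only [Matrix.of_apply, lpnnSecondMoment]
      apply integral_congr_ae
      filter_upwards [hrand (n + 1) hk] with ω hω
      rw [hω]
  have main := lpnn_rec_measurable d L W' V' hind' hW'p hV'p hW'm hV'm x ℓ hℓ i j
  have hVint : (fun a b => ∫ ω, V ℓ ω i a * V ℓ ω j b ∂μ)
      = fun a b => ∫ ω, V' ℓ ω i a * V' ℓ ω j b ∂μ := by
    funext a b
    apply integral_congr_ae
    filter_upwards [hVfull ℓ hℓ] with ω hω
    rw [hω]
  have hWint : (fun a b => ∫ ω, W ℓ ω i a * W ℓ ω j b ∂μ)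
      = fun a b => ∫ ω, W' ℓ ω i a * W' ℓ ω j b ∂μ := by
    funext a b
    apply integral_congr_ae
    filter_upwards [hWfull ℓ hℓ] with ω hω
    rw [hω]
  rw [hsm (ℓ + 1) (Nat.succ_le_of_lt hℓ), hsm ℓ hℓ.le, hVint, hWint]
  exact main
end
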